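/- Let q = 2^h, h > p, k > 0, r > 1, p ≤ r ≤ m, and let R'_{2^h}(k,m) ⊆ R_{2^h}(k,m) be the set of vectors associated with the quadratic functions b' = 2^{h-1}·Σ_{α=0}^{m-k-2} x_{π(α)} x_{π(α+1)} for a single bijection π : {0,...,m-k-1} → I (i.e., taking π_0 = π_1 = ... = π_{2^k-1} = π). Then the Class II code C = ∪_{b ∈ R'_{2^h}(k,m)} { b + a : a ∈ A_{2^h}^p(k,r,m) } is contained in ZRM_{2^h}^p(r,m), and consequently for any two distinct codewords u, v ∈ C, the Hamming distance between u and v is at least 2^{m-r} and the Lee distance is at least 2^{m-r+p}. -/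

import Mathlib

open Finset

/-- The binary expansion of `i`, as a point of `ℤ₂^m`. -/
def bits (m : ℕ) (i : ℕ) : Fin m → ZMod 2 := fun j => if Nat.testBit i j.val then 1 else 0

/-- Admissibility condition on ANF coefficients for `ZRM_{2^h}^p(r,m)`. -/
def zrmCond (h p r m : ℕ) (c : Finset (Fin m) → ZMod (2 ^ h)) : Prop :=
  ∀ S : Finset (Fin m),
    (r < S.card → c S = 0) ∧
    (r - p < S.card → S.card ≤ r →
      ∃ u : ZMod (2 ^ h), c S = 2 ^ (S.card - (r - p)) * u)

/-- The vector of length `2^m` associated with ANF coefficients `c`. -/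
def anfVec (h m : ℕ) (c : Finset (Fin m) → ZMod (2 ^ h)) : Fin (2 ^ m) → ZMod (2 ^ h) :=
  fun i => ∑ S : Finset (Fin m), c S * ∏ α ∈ S, ((bits m i.val α).val : ZMod (2 ^ h))

/-- The code `ZRM_{2^h}^p(r,m)`. -/
def ZRM (h p r m : ℕ) : Set (Fin (2 ^ m) → ZMod (2 ^ h)) :=
  {v | ∃ c : Finset (Fin m) → ZMod (2 ^ h), zrmCond h p r m c ∧ v = anfVec h m c}

/-- The linear code `L_{2^h}(k,m)`. -/
def LCode (h m k : ℕ) (iI : ℕ → Fin m) (jJ : Fin k → Fin m) :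
    Set (Fin (2 ^ m) → ZMod (2 ^ h)) :=
  {v | ∃ (g : ℕ → (Fin k → ZMod 2) → ZMod (2 ^ h)) (g' : (Fin k → ZMod 2) → ZMod (2 ^ h)),
    v = fun i =>
      (∑ α ∈ Finset.range (m - k),
          ((bits m i.val (iI α)).val : ZMod (2 ^ h)) * g α (fun b => bits m i.val (jJ b)))
        + g' (fun b => bits m i.val (jJ b))}

/-- The set `R'_{2^h}(k,m)` of vectors associated with the quadratic forms
`2^{h-1}·∑_α x_{π(α)}x_{π(α+1)}` for a single bijection `π` of `{0,…,m-k-1}` onto `I`. -/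
def RCode' (h m k : ℕ) (iI : ℕ → Fin m) : Set (Fin (2 ^ m) → ZMod (2 ^ h)) :=
  {v | ∃ π : ℕ → Fin m, Set.InjOn π (Set.Iio (m - k)) ∧
    π '' Set.Iio (m - k) = iI '' Set.Iio (m - k) ∧
    v = fun i => ((2 ^ (h - 1) *
      ∑ α ∈ Finset.range (m - k - 1),
        (bits m i.val (π α)).val * (bits m i.val (π (α + 1))).val : ℕ) : ZMod (2 ^ h))}

/-- Hamming distance. -/
def distH {n q : ℕ} (u v : Fin n → ZMod q) : ℕ := (Finset.univ.filter fun i => u i ≠ v i).card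

/-- Lee weight. -/
def wtL {n q : ℕ} (v : Fin n → ZMod q) : ℕ := ∑ i : Fin n, min (v i).val (q - (v i).val)

lemma sum_prod_eq_ite {σ : Type*} [Fintype σ] [DecidableEq σ] (T : Finset σ) :
    (∑ x : σ → ZMod 2, ∏ j ∈ T, x j) = if T = Finset.univ then 1 else 0 := by
  have h1 : ∀ x : σ → ZMod 2, (∏ j ∈ T, x j) = ∏ j : σ, (if j ∈ T then x j else 1) := by
    intro x
    rw [Finset.prod_ite_mem, Finset.univ_inter]
  simp only [h1]
  have h2 : (∑ x : σ → ZMod 2, ∏ j : σ, (if j ∈ T then x j else 1))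
      = ∏ j : σ, ∑ b : ZMod 2, (if j ∈ T then b else 1) := by
    rw [Finset.prod_univ_sum (fun _ => Finset.univ) (fun j b => if j ∈ T then b else 1)]
    rw [Fintype.piFinset_univ]
  rw [h2]
  by_cases hT : T = Finset.univ
  · have : (∑ b : ZMod 2, b) = 1 := by decide
    simp [hT, this]
  · obtain ⟨j, hj⟩ : ∃ j, j ∉ T := by
      by_contra hc
      push_neg at hc
      exact hT (Finset.eq_univ_iff_forall.2 hc)
    rw [if_neg hT]
    apply Finset.prod_eq_zero (Finset.mem_univ j)
    simp [hj]
    decide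

/-- Boolean ANF evaluation. -/
def bev {σ : Type*} [Fintype σ] [DecidableEq σ] (c : Finset σ → ZMod 2) (x : σ → ZMod 2) :
    ZMod 2 := ∑ T : Finset σ, c T * ∏ j ∈ T, x j

lemma key_restrict {σ : Type*} [Fintype σ] [DecidableEq σ] (c : Finset σ → ZMod 2)
    (S : Finset σ) (hS : c S ≠ 0) (hmax : ∀ T, c T ≠ 0 → S ⊆ T → T = S)
    (z : σ → ZMod 2) :
    ∃ x : σ → ZMod 2, (∀ j ∉ S, x j = z j) ∧ bev c x ≠ 0 := by
  classical
  set emb : (↥S → ZMod 2) → σ → ZMod 2 :=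
    fun y j => if hj : j ∈ S then y ⟨j, hj⟩ else z j with hemb
  have hsum : (∑ y : ↥S → ZMod 2, bev c (emb y)) = c S := by
    unfold bev
    rw [Finset.sum_comm]
    have hterm : ∀ T : Finset σ,
        (∑ y : ↥S → ZMod 2, c T * ∏ j ∈ T, emb y j)
          = c T * ((if S ⊆ T then 1 else 0) * ∏ j ∈ T.filter (· ∉ S), z j) := by
      intro T
      have hsplit : ∀ y : ↥S → ZMod 2,
          (∏ j ∈ T, emb y j)
            = (∏ j' ∈ Finset.univ.filter (fun j' : ↥S => (j' : σ) ∈ T), y j')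
              * ∏ j ∈ T.filter (· ∉ S), z j := by
        intro y
        rw [← Finset.prod_filter_mul_prod_filter_not T (· ∈ S)]
        congr 1
        · refine Finset.prod_bij' (fun j hj => (⟨j, (Finset.mem_filter.1 hj).2⟩ : ↥S))
            (fun j' _ => (j' : σ)) ?_ ?_ ?_ ?_ ?_
          · intro j hj
            simp only [Finset.mem_filter, Finset.mem_univ, true_and]
            exact (Finset.mem_filter.1 hj).1
          · intro j' hj'
            simp only [Finset.mem_filter, Finset.mem_univ, true_and] at hj'
            exact Finset.mem_filter.2 ⟨hj', j'.2⟩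
          · intro j hj; rfl
          · intro j' hj'; rfl
          · intro j hj
            simp [hemb, (Finset.mem_filter.1 hj).2]
        · refine Finset.prod_congr rfl fun j hj => ?_
          simp [hemb, (Finset.mem_filter.1 hj).2]
      simp only [hsplit, ← Finset.mul_sum, ← Finset.sum_mul]
      rw [sum_prod_eq_ite]
      have : (Finset.univ.filter (fun j' : ↥S => (j' : σ) ∈ T)) = Finset.univ ↔ S ⊆ T := by
        rw [Finset.filter_eq_self]
        constructor
        · intro hall j hj
          exact hall ⟨j, hj⟩ (Finset.mem_univ _)
        · intro hsub j' _
          exact hsub j'.2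
      by_cases hST : S ⊆ T
      · rw [if_pos (this.2 hST), if_pos hST]
      · rw [if_neg (fun he => hST (this.1 he)), if_neg hST]
    simp only [hterm]
    rw [Finset.sum_eq_single S]
    · rw [if_pos (Finset.Subset.refl S)]
      have : S.filter (· ∉ S) = ∅ := by
        ext j; simp
      rw [this]
      simp
    · intro T _ hT
      by_cases hcT : c T = 0
      · rw [hcT, zero_mul]
      · rw [if_neg (fun hST => hT (hmax T hcT hST)), zero_mul, mul_zero]
    · intro hnot
      exact absurd (Finset.mem_univ S) hnot
  by_contra hcon
  push_neg at hcon
  have : (∑ y : ↥S → ZMod 2, bev c (emb y)) = 0 := by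
    apply Finset.sum_eq_zero
    intro y _
    by_contra hne
    refine hne (hcon (emb y) (fun j hj => ?_)) -- needs bev = 0 from hcon; fix
    simp [hemb, hj]
  rw [hsum] at this
  exact hS this

lemma rm_bound {σ : Type*} [Fintype σ] [DecidableEq σ] (c : Finset σ → ZMod 2) (d : ℕ)
    (hdeg : ∀ T : Finset σ, d < T.card → c T = 0) (hne : ∃ T, c T ≠ 0) :
    2 ^ (Fintype.card σ - d) ≤ (Finset.univ.filter fun x : σ → ZMod 2 => bev c x ≠ 0).card := by
  classical
  obtain ⟨S, hSmem, hSmax⟩ :=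
    Finset.exists_max_image (Finset.univ.filter fun T => c T ≠ 0) Finset.card
      (by obtain ⟨T, hT⟩ := hne; exact ⟨T, Finset.mem_filter.2 ⟨Finset.mem_univ _, hT⟩⟩)
  have hcS : c S ≠ 0 := (Finset.mem_filter.1 hSmem).2
  have hSd : S.card ≤ d := by
    by_contra hc
    exact hcS (hdeg S (by omega))
  have hmax : ∀ T, c T ≠ 0 → S ⊆ T → T = S := by
    intro T hT hST
    exact (Finset.eq_of_subset_of_card_le hST
      (hSmax T (Finset.mem_filter.2 ⟨Finset.mem_univ _, hT⟩))).symm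
  -- the set of z vanishing on S
  set Z : Finset (σ → ZMod 2) := Finset.univ.filter (fun z => ∀ j ∈ S, z j = 0) with hZ
  have hZcard : Z.card = 2 ^ (Fintype.card σ - S.card) := by
    have e : {z : σ → ZMod 2 // ∀ j ∈ S, z j = 0} ≃ (↥(Sᶜ) → ZMod 2) :=
      { toFun := fun z j => z.1 j.1
        invFun := fun g => ⟨fun j => if hj : j ∈ Sᶜ then g ⟨j, hj⟩ else 0,
          fun j hj => dif_neg (by simp [hj])⟩
        left_inv := by
          intro z
          ext j
          by_cases hj : j ∈ Sᶜ
          · simp [hj]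
          · simp only [dif_neg hj]
            exact (z.2 j (by simpa using hj)).symm
        right_inv := by
          intro g
          ext j
          simp [j.2] }
    have h1 : Z.card = Fintype.card {z : σ → ZMod 2 // ∀ j ∈ S, z j = 0} := by
      rw [Fintype.card_subtype]
    rw [h1, Fintype.card_congr e, Fintype.card_fun]
    simp [Finset.card_compl]
  have hinj : ∀ z ∈ Z, ∃ x : σ → ZMod 2, (∀ j ∉ S, x j = z j) ∧ bev c x ≠ 0 :=
    fun z _ => key_restrict c S hcS hmax z
  choose F hF1 hF2 using hinj
  have : Z.card ≤ (Finset.univ.filter fun x : σ → ZMod 2 => bev c x ≠ 0).card := by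
    apply Finset.card_le_card_of_injOn (fun z => if hz : z ∈ Z then F z hz else z)
    · intro z hz
      simp only [Finset.mem_coe] at hz ⊢
      rw [dif_pos hz]
      exact Finset.mem_filter.2 ⟨Finset.mem_univ _, hF2 z hz⟩
    · intro z1 hz1 z2 hz2 heq
      simp only [Finset.mem_coe] at hz1 hz2
      have heq' : F z1 hz1 = F z2 hz2 := by simpa only [dif_pos hz1, dif_pos hz2] using heq
      ext j
      by_cases hj : j ∈ S
      · rw [(Finset.mem_filter.1 hz1).2 j hj, (Finset.mem_filter.1 hz2).2 j hj]
      · rw [← hF1 z1 hz1 j hj, ← hF1 z2 hz2 j hj, heq']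
  calc 2 ^ (Fintype.card σ - d) ≤ 2 ^ (Fintype.card σ - S.card) :=
        Nat.pow_le_pow_right (by norm_num) (by omega)
    _ = Z.card := hZcard.symm
    _ ≤ _ := this

lemma bits_bijective (m : ℕ) :
    Function.Bijective (fun i : Fin (2 ^ m) => bits m i.val) := by
  rw [Fintype.bijective_iff_injective_and_card]
  constructor
  · intro i i' hii
    have hb : ∀ n : ℕ, Nat.testBit i.val n = Nat.testBit i'.val n := by
      intro n
      by_cases hn : n < m
      · have := congrFun hii ⟨n, hn⟩
        simp only [bits] at this
        by_cases h1 : Nat.testBit i.val n <;> by_cases h2 : Nat.testBit i'.val n <;>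
          simp [h1, h2] at this ⊢
      · have h1 : Nat.testBit i.val n = false :=
          Nat.testBit_lt_two_pow (lt_of_lt_of_le i.isLt (Nat.pow_le_pow_right (by norm_num) (by omega)))
        have h2 : Nat.testBit i'.val n = false :=
          Nat.testBit_lt_two_pow (lt_of_lt_of_le i'.isLt (Nat.pow_le_pow_right (by norm_num) (by omega)))
        rw [h1, h2]
    exact Fin.ext (Nat.eq_of_testBit_eq hb)
  · simp [Fintype.card_fun]

lemma zrm_wt (h p r m : ℕ) (hph : p < h) (hpr : p ≤ r) (hrm : r ≤ m)
    (c : Finset (Fin m) → ZMod (2 ^ h)) (hc : zrmCond h p r m c)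
    (hne : anfVec h m c ≠ 0) :
    2 ^ (m - r) ≤ (Finset.univ.filter fun i : Fin (2 ^ m) => anfVec h m c i ≠ 0).card ∧
    2 ^ (m - r + p) ≤ wtL (anfVec h m c) := by
  haveI : NeZero (2 ^ h) := ⟨pow_ne_zero _ (by norm_num)⟩
  haveI : Fact (Nat.Prime 2) := ⟨Nat.prime_two⟩
  classical
  have hsupp : ∃ S, c S ≠ 0 := by
    by_contra hcon
    push_neg at hcon
    exact hne (funext fun i => by simp [anfVec, hcon])
  set supp := Finset.univ.filter (fun S : Finset (Fin m) => c S ≠ 0) with hsuppdef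
  have hsne : supp.Nonempty := by
    obtain ⟨S, hS⟩ := hsupp; exact ⟨S, by simp [hsuppdef, hS]⟩
  set t := (supp.image fun S => padicValNat 2 (c S).val).min' (hsne.image _) with ht
  obtain ⟨S₀, hS₀mem, hS₀⟩ : ∃ S₀ ∈ supp, padicValNat 2 (c S₀).val = t := by
    obtain ⟨a, ha, hmin⟩ := Finset.mem_image.1
      ((supp.image (fun S => padicValNat 2 (c S).val)).min'_mem
        (hsne.image (fun S => padicValNat 2 (c S).val)))
    exact ⟨a, ha, hmin⟩
  have htle : ∀ S ∈ supp, t ≤ padicValNat 2 (c S).val := fun S hS =>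
    Finset.min'_le _ _ (Finset.mem_image_of_mem _ hS)
  have hdvd : ∀ S, 2 ^ t ∣ (c S).val := by
    intro S
    by_cases hS : c S = 0
    · rw [hS, ZMod.val_zero]; exact dvd_zero _
    · exact dvd_trans (pow_dvd_pow 2 (htle S (by simp [hsuppdef, hS]))) pow_padicValNat_dvd
  have hcS₀ : c S₀ ≠ 0 := by
    have := Finset.mem_filter.1 hS₀mem; exact this.2
  have hvalne : (c S₀).val ≠ 0 := fun h0 => hcS₀ ((ZMod.val_eq_zero _).1 h0)
  have hth : t < h := by
    by_contra hcon
    push_neg at hcon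
    have h1 : 2 ^ h ≤ 2 ^ t := Nat.pow_le_pow_right (by norm_num) hcon
    have h2 : 2 ^ t ≤ (c S₀).val := Nat.le_of_dvd (Nat.pos_of_ne_zero hvalne) (hdvd S₀)
    have h3 : (c S₀).val < 2 ^ h := ZMod.val_lt _
    omega
  set cb : Finset (Fin m) → ZMod 2 := fun S => (((c S).val / 2 ^ t : ℕ) : ZMod 2) with hcb
  have hsucc_dvd : ∀ S : Finset (Fin m), 2 ^ (t + 1) ∣ (c S).val → cb S = 0 := by
    intro S hSdvd
    obtain ⟨q, hq⟩ := hSdvd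
    have : (c S).val / 2 ^ t = 2 * q := by
      rw [hq, pow_succ]
      rw [mul_assoc, Nat.mul_div_cancel_left _ (pow_pos two_pos t)]
    show (((c S).val / 2 ^ t : ℕ) : ZMod 2) = 0
    rw [this]
    exact (ZMod.natCast_eq_zero_iff _ _).2 ⟨q, rfl⟩
  have hcbS₀ : cb S₀ ≠ 0 := by
    intro h0
    have h2 : (2 : ℕ) ∣ (c S₀).val / 2 ^ t := by
      rwa [ZMod.natCast_eq_zero_iff] at h0
    obtain ⟨w, hw⟩ := hdvd S₀
    rw [hw, Nat.mul_div_cancel_left _ (pow_pos two_pos t)] at h2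
    obtain ⟨q, hq⟩ := h2
    have : 2 ^ (t + 1) ∣ (c S₀).val := ⟨q, by rw [hw, hq, pow_succ]; ring⟩
    rw [← hS₀] at this
    exact pow_succ_padicValNat_not_dvd hvalne this
  set d := min r (r - p + t) with hd
  have hdegcb : ∀ T : Finset (Fin m), d < T.card → cb T = 0 := by
    intro T hT
    by_cases h1 : r < T.card
    · simp [hcb, (hc T).1 h1]
    · push_neg at h1
      have hdr : d ≤ r - p + t := min_le_right _ _
      have hdr2 : d ≤ r := min_le_left _ _
      have hdd : d = r ∨ d = r - p + t := min_choice _ _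
      have h2 : r - p < T.card := by omega
      obtain ⟨u, hu⟩ := (hc T).2 h2 h1
      have he : t + 1 ≤ T.card - (r - p) := by omega
      apply hsucc_dvd
      have hval : (c T).val = 2 ^ (T.card - (r - p)) * u.val % 2 ^ h := by
        rw [hu]
        rw [show ((2 : ZMod (2 ^ h)) ^ (T.card - (r - p))) =
          ((2 ^ (T.card - (r - p)) : ℕ) : ZMod (2 ^ h)) by push_cast; ring]
        rw [ZMod.val_mul, ZMod.val_natCast, Nat.mod_mul_mod]
      rw [hval]
      rw [Nat.dvd_mod_iff (pow_dvd_pow 2 (by omega))]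
      exact Dvd.dvd.mul_right (pow_dvd_pow 2 he) _
  -- pointwise estimates
  have hpoint : ∀ i : Fin (2 ^ m), bev cb (bits m i.val) ≠ 0 →
      2 ^ t ≤ (anfVec h m c i).val ∧ 2 ^ t ≤ 2 ^ h - (anfVec h m c i).val ∧
        anfVec h m c i ≠ 0 := by
    intro i hbev
    set B : Finset (Fin m) → ℕ := fun S => ∏ j ∈ S, (bits m i.val j).val with hB
    set M' : ℕ := ∑ S : Finset (Fin m), ((c S).val / 2 ^ t) * B S with hM'
    have hM : anfVec h m c i = ((2 ^ t * M' : ℕ) : ZMod (2 ^ h)) := by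
      rw [anfVec]
      rw [show ((2 ^ t * M' : ℕ) : ZMod (2 ^ h)) = ∑ S : Finset (Fin m),
          ((2 ^ t * ((c S).val / 2 ^ t * B S) : ℕ) : ZMod (2 ^ h)) by
        rw [hM', Finset.mul_sum, Nat.cast_sum]]
      refine Finset.sum_congr rfl fun S _ => ?_
      have hBcast : ((B S : ℕ) : ZMod (2 ^ h))
          = ∏ α ∈ S, ((bits m i.val α).val : ZMod (2 ^ h)) := by
        rw [hB]; exact Nat.cast_prod _ _
      calc c S * ∏ α ∈ S, ((bits m i.val α).val : ZMod (2 ^ h))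
          = (((c S).val * B S : ℕ) : ZMod (2 ^ h)) := by
            rw [Nat.cast_mul, hBcast, ZMod.natCast_val, ZMod.cast_id]
        _ = ((2 ^ t * ((c S).val / 2 ^ t * B S) : ℕ) : ZMod (2 ^ h)) := by
            rw [← mul_assoc, Nat.mul_div_cancel' (hdvd S)]
    have hM'par : ¬ (2 ∣ M') := by
      intro h2M
      apply hbev
      have : ((M' : ℕ) : ZMod 2) = 0 := (ZMod.natCast_eq_zero_iff _ _).2 h2M
      rw [hM'] at this
      push_cast at this
      rw [bev]
      rw [← this]
      refine Finset.sum_congr rfl fun S _ => ?_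
      congr 1
      rw [hB]
      push_cast
      refine Finset.prod_congr rfl fun j _ => ?_
      rw [ZMod.natCast_val, ZMod.cast_id]
    have hval : (anfVec h m c i).val = 2 ^ t * (M' % 2 ^ (h - t)) := by
      rw [hM, ZMod.val_natCast]
      rw [show (2 : ℕ) ^ h = 2 ^ t * 2 ^ (h - t) by rw [← pow_add]; congr 1; omega]
      exact Nat.mul_mod_mul_left _ _ _
    set w := M' % 2 ^ (h - t) with hwdef
    have hwodd : w % 2 = 1 := by
      have : w % 2 = M' % 2 := Nat.mod_mod_of_dvd M' (dvd_pow_self 2 (by omega))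
      omega
    have hwlt : w < 2 ^ (h - t) := Nat.mod_lt _ (pow_pos two_pos _)
    have hwpos : 1 ≤ w := by omega
    refine ⟨?_, ?_, ?_⟩
    · rw [hval]; exact Nat.le_mul_of_pos_right _ hwpos
    · rw [hval]
      have : 2 ^ t * w + 2 ^ t ≤ 2 ^ t * 2 ^ (h - t) := by
        have : w + 1 ≤ 2 ^ (h - t) := hwlt
        calc 2 ^ t * w + 2 ^ t = 2 ^ t * (w + 1) := by ring
          _ ≤ 2 ^ t * 2 ^ (h - t) := Nat.mul_le_mul_left _ this
      rw [show (2 : ℕ) ^ h = 2 ^ t * 2 ^ (h - t) by rw [← pow_add]; congr 1; omega]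
      omega
    · intro h0
      rw [h0, ZMod.val_zero] at hval
      have : 0 < 2 ^ t * w := Nat.mul_pos (pow_pos two_pos _) hwpos
      omega
  -- counting
  have hcount := rm_bound cb d hdegcb ⟨S₀, hcbS₀⟩
  rw [Fintype.card_fin] at hcount
  set filterI := Finset.univ.filter (fun i : Fin (2 ^ m) => bev cb (bits m i.val) ≠ 0)
    with hfI
  have htrans : (Finset.univ.filter fun x : Fin m → ZMod 2 => bev cb x ≠ 0).card
      = filterI.card := by
    symm
    apply Finset.card_bij (fun (i : Fin (2 ^ m)) (_ : i ∈ filterI) => bits m i.val)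
    · intro i hi
      rw [hfI] at hi
      exact Finset.mem_filter.2 ⟨Finset.mem_univ _, (Finset.mem_filter.1 hi).2⟩
    · intro i1 h1 i2 h2 heq
      exact (bits_bijective m).1 heq
    · intro x hx
      obtain ⟨i, hi⟩ := (bits_bijective m).2 x
      refine ⟨i, ?_, hi⟩
      rw [hfI]
      refine Finset.mem_filter.2 ⟨Finset.mem_univ _, ?_⟩
      rw [show bits m i.val = x from hi]
      exact (Finset.mem_filter.1 hx).2
  have hcount2 : 2 ^ (m - d) ≤ filterI.card := by rw [← htrans]; exact hcount
  have hdle : d ≤ r := min_le_left _ _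
  constructor
  · calc 2 ^ (m - r) ≤ 2 ^ (m - d) := Nat.pow_le_pow_right (by norm_num) (by omega)
      _ ≤ filterI.card := hcount2
      _ ≤ _ := by
        apply Finset.card_le_card
        intro i hi
        rw [hfI] at hi
        exact Finset.mem_filter.2
          ⟨Finset.mem_univ _, (hpoint i (Finset.mem_filter.1 hi).2).2.2⟩
  · have hsum : filterI.card * 2 ^ t ≤ wtL (anfVec h m c) := by
      rw [wtL]
      calc filterI.card * 2 ^ t = filterI.card • 2 ^ t := by rw [smul_eq_mul]
        _ ≤ ∑ i ∈ filterI, min (anfVec h m c i).val (2 ^ h - (anfVec h m c i).val) := by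
            apply Finset.card_nsmul_le_sum
            intro i hi
            rw [hfI] at hi
            obtain ⟨h1, h2, _⟩ := hpoint i (Finset.mem_filter.1 hi).2
            exact le_min h1 h2
        _ ≤ _ := Finset.sum_le_sum_of_subset (Finset.subset_univ _)
    calc 2 ^ (m - r + p) ≤ 2 ^ (m - d) * 2 ^ t := by
          rw [← pow_add]
          apply Nat.pow_le_pow_right (by norm_num)
          have := min_le_right r (r - p + t)
          omega
      _ ≤ filterI.card * 2 ^ t := Nat.mul_le_mul_right _ hcount2
      _ ≤ _ := hsum

lemma anfVec_add (h m : ℕ) (c1 c2 : Finset (Fin m) → ZMod (2 ^ h)) :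
    anfVec h m (fun S => c1 S + c2 S) = anfVec h m c1 + anfVec h m c2 := by
  funext i
  simp [anfVec, add_mul, Finset.sum_add_distrib]

lemma anfVec_neg (h m : ℕ) (c : Finset (Fin m) → ZMod (2 ^ h)) :
    anfVec h m (fun S => -c S) = -anfVec h m c := by
  funext i
  simp [anfVec, neg_mul, Finset.sum_neg_distrib]

lemma zrmCond_add (h p r m : ℕ) (c1 c2 : Finset (Fin m) → ZMod (2 ^ h))
    (h1 : zrmCond h p r m c1) (h2 : zrmCond h p r m c2) :
    zrmCond h p r m (fun S => c1 S + c2 S) := by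
  intro S
  refine ⟨fun hS => by show c1 S + c2 S = 0; rw [(h1 S).1 hS, (h2 S).1 hS, add_zero], fun ha hb => ?_⟩
  obtain ⟨u1, hu1⟩ := (h1 S).2 ha hb
  obtain ⟨u2, hu2⟩ := (h2 S).2 ha hb
  exact ⟨u1 + u2, by show c1 S + c2 S = _; rw [hu1, hu2, mul_add]⟩

lemma zrmCond_neg (h p r m : ℕ) (c : Finset (Fin m) → ZMod (2 ^ h))
    (h1 : zrmCond h p r m c) : zrmCond h p r m (fun S => -c S) := by
  intro S
  refine ⟨fun hS => by show -c S = 0; rw [(h1 S).1 hS, neg_zero], fun ha hb => ?_⟩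
  obtain ⟨u, hu⟩ := (h1 S).2 ha hb
  exact ⟨-u, by show -c S = _; rw [hu, mul_neg]⟩

lemma rcode_coeff (h p r m k : ℕ) (hph : p < h) (hr : 1 < r) (hpr : p ≤ r)
    (iI : ℕ → Fin m) (b : Fin (2 ^ m) → ZMod (2 ^ h)) (hb : b ∈ RCode' h m k iI) :
    ∃ c, zrmCond h p r m c ∧ b = anfVec h m c := by
  classical
  obtain ⟨π, hπinj, -, hbeq⟩ := hb
  set cb : Finset (Fin m) → ZMod (2 ^ h) := fun S =>
    ∑ α ∈ Finset.range (m - k - 1),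
      if S = {π α, π (α + 1)} then (2 ^ (h - 1) : ZMod (2 ^ h)) else 0 with hcbdef
  have hpairne : ∀ α ∈ Finset.range (m - k - 1), π α ≠ π (α + 1) := by
    intro α hα he
    rw [Finset.mem_range] at hα
    have := hπinj (show α ∈ Set.Iio (m - k) by simp only [Set.mem_Iio]; omega)
      (show α + 1 ∈ Set.Iio (m - k) by simp only [Set.mem_Iio]; omega) he
    omega
  refine ⟨cb, ?_, ?_⟩
  · intro S
    constructor
    · intro hS
      apply Finset.sum_eq_zero
      intro α hα
      rw [if_neg]
      intro he
      rw [he, Finset.card_pair (hpairne α hα)] at hS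
      omega
    · intro h1 h2
      by_cases hex : ∃ α ∈ Finset.range (m - k - 1), S = {π α, π (α + 1)}
      · obtain ⟨α, hα, hSeq⟩ := hex
        have hcard : S.card = 2 := by rw [hSeq]; exact Finset.card_pair (hpairne α hα)
        have he : S.card - (r - p) ≤ h - 1 := by omega
        refine ⟨2 ^ (h - 1 - (S.card - (r - p))) *
          ∑ β ∈ Finset.range (m - k - 1),
            (if S = {π β, π (β + 1)} then 1 else 0 : ZMod (2 ^ h)), ?_⟩
        have hfac : cb S = 2 ^ (h - 1) *
            ∑ β ∈ Finset.range (m - k - 1),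
              (if S = {π β, π (β + 1)} then 1 else 0 : ZMod (2 ^ h)) := by
          rw [hcbdef, Finset.mul_sum]
          exact Finset.sum_congr rfl fun β _ => by rw [mul_ite, mul_one, mul_zero]
        rw [hfac, ← mul_assoc, ← pow_add]
        congr 2
        omega
      · push_neg at hex
        refine ⟨0, ?_⟩
        rw [mul_zero]
        apply Finset.sum_eq_zero
        intro α hα
        exact if_neg (hex α hα)
  · rw [hbeq]
    funext i
    have hswap : anfVec h m cb i = ∑ α ∈ Finset.range (m - k - 1),
        (2 ^ (h - 1) : ZMod (2 ^ h)) * (((bits m i.val (π α)).val : ZMod (2 ^ h)) *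
          ((bits m i.val (π (α + 1))).val : ZMod (2 ^ h))) := by
      rw [anfVec]
      simp only [hcbdef, Finset.sum_mul, ite_mul, zero_mul]
      rw [Finset.sum_comm]
      refine Finset.sum_congr rfl fun α hα => ?_
      rw [Finset.sum_ite_eq' Finset.univ ({π α, π (α + 1)} : Finset (Fin m))]
      rw [if_pos (Finset.mem_univ _)]
      rw [Finset.prod_pair (hpairne α hα)]
    rw [hswap]
    push_cast [Finset.mul_sum]
    rfl

/-- Class II codes (`k > 0`, `r > 1`): the union of the cosets `b + A_{2^h}^p(k,r,m)` over
`b ∈ R'_{2^h}(k,m)` is contained in `ZRM_{2^h}^p(r,m)`, hence has minimum Hamming distance at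
least `2^{m-r}` and minimum Lee distance at least `2^{m-r+p}`. -/
theorem stmt_15 (h p r m k : ℕ) (hph : p < h) (hk : 0 < k) (hr : 1 < r) (hpr : p ≤ r)
    (hrm : r ≤ m) (hkm : k ≤ m)
    (iI : ℕ → Fin m) (jJ : Fin k → Fin m)
    (hiInj : Set.InjOn iI (Set.Iio (m - k))) (hjInj : Function.Injective jJ)
    (hdisj : ∀ a < m - k, ∀ b : Fin k, iI a ≠ jJ b)
    (hcover : ∀ v : Fin m, (∃ a < m - k, iI a = v) ∨ ∃ b : Fin k, jJ b = v) :
    (∀ w, (∃ b ∈ RCode' h m k iI, ∃ a ∈ LCode h m k iI jJ ∩ ZRM h p r m, w = b + a) →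
      w ∈ ZRM h p r m) ∧
    (∀ u v : Fin (2 ^ m) → ZMod (2 ^ h),
      (∃ b ∈ RCode' h m k iI, ∃ a ∈ LCode h m k iI jJ ∩ ZRM h p r m, u = b + a) →
      (∃ b ∈ RCode' h m k iI, ∃ a ∈ LCode h m k iI jJ ∩ ZRM h p r m, v = b + a) →
      u ≠ v →
      2 ^ (m - r) ≤ distH u v ∧ 2 ^ (m - r + p) ≤ wtL (u - v)) := by

  have hmem : ∀ w, (∃ b ∈ RCode' h m k iI, ∃ a ∈ LCode h m k iI jJ ∩ ZRM h p r m, w = b + a) →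
      w ∈ ZRM h p r m := by
    rintro w ⟨b, hb, a, ⟨-, ha⟩, rfl⟩
    obtain ⟨cb, hcb, hbeq⟩ := rcode_coeff h p r m k hph hr hpr iI b hb
    obtain ⟨ca, hca, haeq⟩ := ha
    exact ⟨fun S => cb S + ca S, zrmCond_add _ _ _ _ _ _ hcb hca, by
      rw [anfVec_add, ← hbeq, ← haeq]⟩
  refine ⟨hmem, ?_⟩
  intro u v hu hv huv
  obtain ⟨cu, hcu, hueq⟩ := hmem u hu
  obtain ⟨cv, hcv, hveq⟩ := hmem v hv
  set c : Finset (Fin m) → ZMod (2 ^ h) := fun S => cu S + -cv S with hc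
  have hcc : zrmCond h p r m c :=
    zrmCond_add _ _ _ _ _ _ hcu (zrmCond_neg _ _ _ _ _ hcv)
  have hsub : u - v = anfVec h m c := by
    rw [hc, anfVec_add, anfVec_neg, ← hueq, ← hveq, sub_eq_add_neg]
  have hne : anfVec h m c ≠ 0 := by
    rw [← hsub]; exact sub_ne_zero.2 huv
  obtain ⟨hH, hL⟩ := zrm_wt h p r m hph hpr hrm c hcc hne
  constructor
  · rw [distH]
    have hfilt : (Finset.univ.filter fun i => u i ≠ v i)
        = (Finset.univ.filter fun i : Fin (2 ^ m) => anfVec h m c i ≠ 0) := by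
      apply Finset.filter_congr
      intro i _
      rw [← congrFun hsub i]
      simp [sub_ne_zero]
    rw [hfilt]
    exact hH
  · rw [hsub]
    exact hL
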